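/- Let u : ℝ³ → ℝ be continuously differentiable with compact support. Then ∫_{ℝ³} u⁴ ≤ 4³ · ‖u‖_{L²(ℝ³)} · ‖∇u‖_{L²(ℝ³)}³. -/

import Mathlib

open MeasureTheory Set
open scoped ENNReal NNReal

noncomputable section FourthPower

namespace FourthPowerAux

def ψ3 : ℝ × ℝ × ℝ → EuclideanSpace ℝ (Fin 3) := fun p =>
  (WithLp.equiv 2 (Fin 3 → ℝ)).symm ![p.1, p.2.1, p.2.2]

lemma mp_ψ3 : MeasurePreserving ψ3 volume volume := by
  have h1 : MeasurePreserving (fun p : ℝ × (ℝ × ℝ) =>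
      ((MeasurableEquiv.piFinSuccAbove (fun _ : Fin 3 => ℝ) 0).symm
        (p.1, MeasurableEquiv.finTwoArrow.symm p.2))) volume volume := by
    have hA : MeasurePreserving (Prod.map (id : ℝ → ℝ)
        (MeasurableEquiv.finTwoArrow.symm : ℝ × ℝ → (Fin 2 → ℝ))) volume volume :=
      (MeasurePreserving.id volume).prod (volume_preserving_finTwoArrow ℝ).symm
    exact ((volume_preserving_piFinSuccAbove (fun _ : Fin 3 => ℝ) 0).symm).comp hA
  have h2 := (PiLp.volume_preserving_toLp (Fin 3)).comp h1
  convert h2 using 1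
  · rfl
  funext p
  show ψ3 p = (WithLp.equiv 2 (Fin 3 → ℝ)).symm _
  ext j
  fin_cases j <;> rfl

lemma psi_aff1 (x y z : ℝ) : ψ3 (x, y, z) = ψ3 (0, y, z) + x • EuclideanSpace.single 0 (1:ℝ) := by
  ext j; fin_cases j <;>
    simp [ψ3, PiLp.add_apply, PiLp.smul_apply, EuclideanSpace.single_apply]

lemma psi_aff2 (x y z : ℝ) : ψ3 (x, y, z) = ψ3 (x, 0, z) + y • EuclideanSpace.single 1 (1:ℝ) := by
  ext j; fin_cases j <;>
    simp [ψ3, PiLp.add_apply, PiLp.smul_apply, EuclideanSpace.single_apply]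

lemma psi_aff3 (x y z : ℝ) : ψ3 (x, y, z) = ψ3 (x, y, 0) + z • EuclideanSpace.single 2 (1:ℝ) := by
  ext j; fin_cases j <;>
    simp [ψ3, PiLp.add_apply, PiLp.smul_apply, EuclideanSpace.single_apply]

lemma lint3_xyz (f : ℝ × ℝ × ℝ → ℝ≥0∞) (hf : Measurable f) :
    ∫⁻ p, f p = ∫⁻ x, ∫⁻ y, ∫⁻ z, f (x, y, z) := by
  rw [Measure.volume_eq_prod, lintegral_prod _ hf.aemeasurable]
  refine lintegral_congr fun x => ?_
  exact lintegral_prod (fun q => f (x, q)) ((hf.comp measurable_prodMk_left).aemeasurable)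

lemma lint3_zxy (f : ℝ × ℝ × ℝ → ℝ≥0∞) (hf : Measurable f) :
    ∫⁻ p, f p = ∫⁻ z, ∫⁻ x, ∫⁻ y, f (x, y, z) := by
  rw [lint3_xyz f hf]
  have m1 : ∀ x : ℝ, Measurable fun q : ℝ × ℝ => f (x, q.1, q.2) := fun x =>
    hf.comp (measurable_prodMk_left.comp (measurable_fst.prodMk measurable_snd))
  have step1 : (∫⁻ x, ∫⁻ y, ∫⁻ z, f (x, y, z)) = ∫⁻ x, ∫⁻ z, ∫⁻ y, f (x, y, z) := by
    refine lintegral_congr fun x => ?_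
    exact lintegral_lintegral_swap ((m1 x).aemeasurable)
  rw [step1]
  have m2 : Measurable fun q : ℝ × ℝ => ∫⁻ y, f (q.1, y, q.2) := by
    have : Measurable fun r : (ℝ × ℝ) × ℝ => f (r.1.1, r.2, r.1.2) :=
      hf.comp ((measurable_fst.comp measurable_fst).prodMk
        (measurable_snd.prodMk (measurable_snd.comp measurable_fst)))
    exact this.lintegral_prod_right'
  exact lintegral_lintegral_swap m2.aemeasurable

variable {u : EuclideanSpace ℝ (Fin 3) → ℝ}

lemma slice_sq_le (hu : ContDiff ℝ 1 u) (hsupp : HasCompactSupport u)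
    (c v : EuclideanSpace ℝ (Fin 3)) (hv : ‖v‖ = 1) (x : ℝ) :
    (‖u (c + x • v)‖₊ : ℝ≥0∞) ^ 2 ≤
      2 * ∫⁻ t : ℝ, (‖u (c + t • v)‖₊ : ℝ≥0∞) * ‖fderiv ℝ u (c + t • v)‖₊ := by
  set L : ℝ → EuclideanSpace ℝ (Fin 3) := fun s => c + s • v with hL
  have hLd : ∀ t : ℝ, HasDerivAt L v t := fun t => by
    have := ((hasDerivAt_id t).smul_const v).const_add c
    rw [one_smul] at this
    exact this
  have hLc : ContDiff ℝ 1 L := contDiff_const.add (contDiff_id.smul contDiff_const)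
  set f : ℝ → ℝ := fun s => (u (L s)) ^ 2 with hf
  have hfd : ∀ t : ℝ, HasDerivAt f (2 * u (L t) ^ 1 * (fderiv ℝ u (L t) v)) t := by
    intro t
    exact (((hu.differentiable one_ne_zero (L t)).hasFDerivAt.comp_hasDerivAt t (hLd t)).pow 2).congr_deriv
      (by norm_num)
  have hfc : ContDiff ℝ 1 f := (hu.comp hLc).pow 2
  obtain ⟨R, hR0, hR⟩ := hsupp.exists_pos_le_norm
  have hfs : HasCompactSupport f := by
    apply HasCompactSupport.intro (isCompact_Icc (a := -(R + ‖c‖)) (b := R + ‖c‖))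
    intro s hs
    have h1 : R + ‖c‖ < |s| := by
      rcases abs_cases s with ⟨h, _⟩ | ⟨h, _⟩ <;> simp only [mem_Icc, not_and_or, not_le] at hs <;>
        cases hs <;> linarith
    have h2 : R ≤ ‖L s‖ := by
      have h3 : ‖s • v‖ - ‖c‖ ≤ ‖c + s • v‖ := by
        have := norm_sub_le (c + s • v) c
        simpa using this
      have h4 : ‖s • v‖ = |s| := by rw [norm_smul, hv]; simp
      simp only [hL]
      rw [h4] at h3
      linarith
    simp [hf, hR _ h2]
  have key := hfs.enorm_le_lintegral_Ici_deriv hfc x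
  have hv' : ‖v‖₊ = 1 := by ext; simpa using hv
  have hLHS : (‖u (c + x • v)‖₊ : ℝ≥0∞) ^ 2 = (‖f x‖₊ : ℝ≥0∞) := by
    simp [hf, hL, nnnorm_pow]
  rw [hLHS]
  refine key.trans ?_
  have bound : ∀ y : ℝ, (‖deriv f y‖₊ : ℝ≥0∞) ≤
      2 * ((‖u (L y)‖₊ : ℝ≥0∞) * ‖fderiv ℝ u (L y)‖₊) := by
    intro y
    rw [(hfd y).deriv]
    have h1 : ‖(2 : ℝ) * u (L y) ^ 1 * (fderiv ℝ u (L y) v)‖₊ ≤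
        2 * (‖u (L y)‖₊ * ‖fderiv ℝ u (L y)‖₊) := by
      rw [nnnorm_mul, nnnorm_mul]
      have h2 : ‖fderiv ℝ u (L y) v‖₊ ≤ ‖fderiv ℝ u (L y)‖₊ := by
        simpa [hv'] using (fderiv ℝ u (L y)).le_opNNNorm v
      calc ‖(2:ℝ)‖₊ * ‖u (L y) ^ 1‖₊ * ‖fderiv ℝ u (L y) v‖₊
          = 2 * (‖u (L y)‖₊ * ‖fderiv ℝ u (L y) v‖₊) := by
            simp [pow_one, mul_assoc]
        _ ≤ 2 * (‖u (L y)‖₊ * ‖fderiv ℝ u (L y)‖₊) := by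
            gcongr
    calc (‖(2 : ℝ) * u (L y) ^ 1 * (fderiv ℝ u (L y) v)‖₊ : ℝ≥0∞)
        ≤ ((2 * (‖u (L y)‖₊ * ‖fderiv ℝ u (L y)‖₊) : ℝ≥0) : ℝ≥0∞) := ENNReal.coe_le_coe.2 h1
      _ = 2 * ((‖u (L y)‖₊ : ℝ≥0∞) * ‖fderiv ℝ u (L y)‖₊) := by push_cast; ring
  calc ∫⁻ y in Iic x, (‖deriv f y‖₊ : ℝ≥0∞)
      ≤ ∫⁻ y, (‖deriv f y‖₊ : ℝ≥0∞) := setLIntegral_le_lintegral _ _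
    _ ≤ ∫⁻ y, 2 * ((‖u (L y)‖₊ : ℝ≥0∞) * ‖fderiv ℝ u (L y)‖₊) := lintegral_mono bound
    _ = 2 * ∫⁻ t, (‖u (c + t • v)‖₊ : ℝ≥0∞) * ‖fderiv ℝ u (c + t • v)‖₊ :=
        lintegral_const_mul' 2 _ (by simp)

lemma rpow_two_eq (a : ℝ≥0∞) : a ^ (2:ℝ) = a ^ 2 := by
  rw [show (2:ℝ) = ((2:ℕ):ℝ) by norm_num, ENNReal.rpow_natCast]

lemma cs_lintegral {α : Type*} [MeasurableSpace α] (μ : Measure α) (f g : α → ℝ≥0∞)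
    (hf : AEMeasurable f μ) (hg : AEMeasurable g μ) :
    ∫⁻ a, f a * g a ∂μ ≤ (∫⁻ a, f a ^ 2 ∂μ) ^ ((1:ℝ)/2) * (∫⁻ a, g a ^ 2 ∂μ) ^ ((1:ℝ)/2) := by
  have hpq : Real.HolderConjugate 2 2 := Real.HolderConjugate.two_two
  have := ENNReal.lintegral_mul_le_Lp_mul_Lq μ hpq hf hg
  simp only [Pi.mul_apply, rpow_two_eq] at this
  exact this

lemma main_ennreal (hu : ContDiff ℝ 1 u) (hsupp : HasCompactSupport u) :
    ∫⁻ x, (‖u x‖₊ : ℝ≥0∞) ^ 4 ≤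
      8 * (∫⁻ x, (‖u x‖₊ : ℝ≥0∞) ^ 2) ^ ((1:ℝ)/2) *
        (∫⁻ x, (‖fderiv ℝ u x‖₊ : ℝ≥0∞) ^ 2) ^ ((3:ℝ)/2) := by
  classical
  have hcu : Continuous u := hu.continuous
  have hcf : Continuous (fderiv ℝ u) := hu.continuous_fderiv one_ne_zero
  set U : ℝ × ℝ × ℝ → ℝ≥0∞ := fun p => (‖u (ψ3 p)‖₊ : ℝ≥0∞) with hUdef
  set D : ℝ × ℝ × ℝ → ℝ≥0∞ := fun p => (‖fderiv ℝ u (ψ3 p)‖₊ : ℝ≥0∞) with hDdef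
  set W : ℝ × ℝ × ℝ → ℝ≥0∞ := fun p => U p * D p with hWdef
  have hψm : Measurable ψ3 := mp_ψ3.measurable
  have hU : Measurable U := (hcu.measurable.comp hψm).enorm
  have hD : Measurable D := (hcf.measurable.comp hψm).enorm
  have hW : Measurable W := hU.mul hD
  have msect : ∀ z : ℝ, Measurable fun q : ℝ × ℝ => (q.1, q.2, z) := fun z =>
    measurable_fst.prodMk (measurable_snd.prodMk measurable_const)
  -- slice bounds
  have hones : ∀ i : Fin 3, ‖(EuclideanSpace.single i (1:ℝ))‖ = 1 := fun i => by
    simp [EuclideanSpace.norm_single]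
  have s1 : ∀ x y z : ℝ, U (x, y, z) ^ 2 ≤ 2 * ∫⁻ t, W (t, y, z) := by
    intro x y z
    have h := slice_sq_le hu hsupp (ψ3 (0, y, z)) _ (hones 0) x
    simp only [hUdef, hWdef, hDdef, ← psi_aff1] at h ⊢
    exact h
  have s2 : ∀ x y z : ℝ, U (x, y, z) ^ 2 ≤ 2 * ∫⁻ s, W (x, s, z) := by
    intro x y z
    have h := slice_sq_le hu hsupp (ψ3 (x, 0, z)) _ (hones 1) y
    simp only [hUdef, hWdef, hDdef, ← psi_aff2] at h ⊢
    exact h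
  have s3 : ∀ x y z : ℝ, U (x, y, z) ^ 2 ≤ 2 * ∫⁻ r, W (x, y, r) := by
    intro x y z
    have h := slice_sq_le hu hsupp (ψ3 (x, y, 0)) _ (hones 2) z
    simp only [hUdef, hWdef, hDdef, ← psi_aff3] at h ⊢
    exact h
  set A : ℝ≥0∞ := ∫⁻ p, U p ^ 2 with hAdef
  set B : ℝ≥0∞ := ∫⁻ p, D p ^ 2 with hBdef
  set K : ℝ≥0∞ := ∫⁻ p, W p with hKdef
  -- 2D slice quantities (as product-space integrals)
  set Q : ℝ → ℝ≥0∞ := fun z => ∫⁻ q : ℝ × ℝ, W (q.1, q.2, z) with hQdef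
  set A2 : ℝ → ℝ≥0∞ := fun z => ∫⁻ q : ℝ × ℝ, U (q.1, q.2, z) ^ 2 with hA2def
  set B2 : ℝ → ℝ≥0∞ := fun z => ∫⁻ q : ℝ × ℝ, D (q.1, q.2, z) ^ 2 with hB2def
  have hQiter : ∀ z : ℝ, Q z = ∫⁻ x, ∫⁻ y, W (x, y, z) := fun z =>
    lintegral_prod _ ((hW.comp (msect z)).aemeasurable)
  have hB2iter : ∀ z : ℝ, B2 z = ∫⁻ x, ∫⁻ y, D (x, y, z) ^ 2 := fun z =>
    lintegral_prod _ (((hD.comp (msect z)).pow_const 2).aemeasurable)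
  have mB2 : Measurable B2 := by
    have : Measurable fun r : ℝ × (ℝ × ℝ) => D (r.2.1, r.2.2, r.1) ^ 2 :=
      (hD.comp ((measurable_fst.comp measurable_snd).prodMk
        ((measurable_snd.comp measurable_snd).prodMk measurable_fst))).pow_const 2
    exact this.lintegral_prod_right'
  -- A2 z ≤ 2 K
  have hA2K : ∀ z : ℝ, A2 z ≤ 2 * K := by
    intro z
    have step : A2 z ≤ ∫⁻ q : ℝ × ℝ, 2 * ∫⁻ r, W (q.1, q.2, r) :=
      lintegral_mono fun q => s3 q.1 q.2 z
    refine step.trans ?_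
    have minner : Measurable fun q : ℝ × ℝ => ∫⁻ r, W (q.1, q.2, r) := by
      have : Measurable fun r : (ℝ × ℝ) × ℝ => W (r.1.1, r.1.2, r.2) :=
        hW.comp ((measurable_fst.comp measurable_fst).prodMk
          ((measurable_snd.comp measurable_fst).prodMk measurable_snd))
      exact this.lintegral_prod_right'
    rw [lintegral_const_mul 2 minner]
    have : (∫⁻ q : ℝ × ℝ, ∫⁻ r, W (q.1, q.2, r)) = K := by
      rw [hKdef, lint3_xyz W hW]
      exact lintegral_prod (fun q => ∫⁻ r, W (q.1, q.2, r)) minner.aemeasurable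
    rw [this]
  -- Q z ≤ A2^{1/2} B2^{1/2}
  have hQ_cs : ∀ z : ℝ, Q z ≤ A2 z ^ ((1:ℝ)/2) * B2 z ^ ((1:ℝ)/2) := fun z =>
    cs_lintegral _ _ _ ((hU.comp (msect z)).aemeasurable) ((hD.comp (msect z)).aemeasurable)
  -- pointwise product bound
  have hQQ : ∀ z : ℝ, Q z * Q z ≤ (2 * K) * B2 z := by
    intro z
    have half : ∀ c : ℝ≥0∞, c ^ ((1:ℝ)/2) * c ^ ((1:ℝ)/2) = c := fun c => by
      rw [← ENNReal.rpow_add_of_nonneg _ _ (by norm_num) (by norm_num)]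
      norm_num
    calc Q z * Q z ≤ (A2 z ^ ((1:ℝ)/2) * B2 z ^ ((1:ℝ)/2)) *
          (A2 z ^ ((1:ℝ)/2) * B2 z ^ ((1:ℝ)/2)) := mul_le_mul' (hQ_cs z) (hQ_cs z)
      _ = (A2 z ^ ((1:ℝ)/2) * A2 z ^ ((1:ℝ)/2)) * (B2 z ^ ((1:ℝ)/2) * B2 z ^ ((1:ℝ)/2)) := by
          ring
      _ = A2 z * B2 z := by rw [half, half]
      _ ≤ (2 * K) * B2 z := mul_le_mul_left (hA2K z) _
  -- main iterated bound
  have main : (∫⁻ p, U p ^ 4) ≤ ∫⁻ z, 4 * (Q z * Q z) := by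
    rw [lint3_zxy _ (hU.pow_const 4)]
    refine lintegral_mono fun z => ?_
    have mF : Measurable fun y : ℝ => ∫⁻ t, W (t, y, z) := by
      have : Measurable fun r : ℝ × ℝ => W (r.2, r.1, z) :=
        hW.comp (measurable_snd.prodMk (measurable_fst.prodMk measurable_const))
      exact this.lintegral_prod_right'
    have mG : Measurable fun x : ℝ => ∫⁻ s, W (x, s, z) := by
      have : Measurable fun r : ℝ × ℝ => W (r.1, r.2, z) := hW.comp (msect z)
      exact this.lintegral_prod_right'
    set P : ℝ≥0∞ := ∫⁻ y, ∫⁻ t, W (t, y, z) with hPdef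
    have hPQ : P = Q z := by
      have hmeas : AEMeasurable (Function.uncurry fun (y t : ℝ) => W (t, y, z))
          (volume.prod volume) := by
        have hm : Measurable fun r : ℝ × ℝ => W (r.2, r.1, z) :=
          hW.comp (measurable_snd.prodMk (measurable_fst.prodMk measurable_const))
        exact hm.aemeasurable
      rw [hPdef, hQiter z]
      exact lintegral_lintegral_swap hmeas
    have inner_y : ∀ x : ℝ, (∫⁻ y, U (x, y, z) ^ 4) ≤
        ((4 * ∫⁻ s, W (x, s, z)) * P) := by
      intro x
      have pt : ∀ y : ℝ, U (x, y, z) ^ 4 ≤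
          (4 * ∫⁻ s, W (x, s, z)) * ∫⁻ t, W (t, y, z) := by
        intro y
        have h4 : U (x, y, z) ^ 4 = U (x, y, z) ^ 2 * U (x, y, z) ^ 2 := by ring
        rw [h4]
        calc U (x, y, z) ^ 2 * U (x, y, z) ^ 2
            ≤ (2 * ∫⁻ s, W (x, s, z)) * (2 * ∫⁻ t, W (t, y, z)) :=
              mul_le_mul' (s2 x y z) (s1 x y z)
          _ = (4 * ∫⁻ s, W (x, s, z)) * ∫⁻ t, W (t, y, z) := by ring
      calc (∫⁻ y, U (x, y, z) ^ 4)
          ≤ ∫⁻ y, (4 * ∫⁻ s, W (x, s, z)) * ∫⁻ t, W (t, y, z) := lintegral_mono pt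
        _ = (4 * ∫⁻ s, W (x, s, z)) * P := lintegral_const_mul _ mF
    calc (∫⁻ x, ∫⁻ y, U (x, y, z) ^ 4)
        ≤ ∫⁻ x, (4 * ∫⁻ s, W (x, s, z)) * P := lintegral_mono inner_y
      _ = ∫⁻ x, (4 * P) * ∫⁻ s, W (x, s, z) := by
          refine lintegral_congr fun x => ?_; ring
      _ = (4 * P) * ∫⁻ x, ∫⁻ s, W (x, s, z) := lintegral_const_mul _ mG
      _ = (4 * P) * Q z := by rw [hQiter z]
      _ = 4 * (Q z * Q z) := by rw [hPQ]; ring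
  -- combine
  have step2 : (∫⁻ z, 4 * (Q z * Q z)) ≤ (8 * K) * B := by
    calc (∫⁻ z, 4 * (Q z * Q z))
        ≤ ∫⁻ z, (8 * K) * B2 z := by
          refine lintegral_mono fun z => ?_
          calc 4 * (Q z * Q z) ≤ 4 * ((2 * K) * B2 z) := mul_le_mul_right (hQQ z) _
            _ = (8 * K) * B2 z := by ring
      _ = (8 * K) * ∫⁻ z, B2 z := lintegral_const_mul _ mB2
      _ = (8 * K) * B := by
          congr 1
          rw [hBdef, lint3_zxy _ (hD.pow_const 2)]
          exact (lintegral_congr fun z => (hB2iter z).symm).symm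
  have hK_cs : K ≤ A ^ ((1:ℝ)/2) * B ^ ((1:ℝ)/2) :=
    cs_lintegral volume U D hU.aemeasurable hD.aemeasurable
  have final : (∫⁻ p, U p ^ 4) ≤ 8 * A ^ ((1:ℝ)/2) * B ^ ((3:ℝ)/2) := by
    refine (main.trans step2).trans ?_
    calc (8 * K) * B ≤ (8 * (A ^ ((1:ℝ)/2) * B ^ ((1:ℝ)/2))) * B := by
          exact mul_le_mul_left (mul_le_mul_right hK_cs 8) B
      _ = 8 * A ^ ((1:ℝ)/2) * (B ^ ((1:ℝ)/2) * B ^ ((1:ℝ))) := by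
          rw [ENNReal.rpow_one]; ring
      _ = 8 * A ^ ((1:ℝ)/2) * B ^ ((3:ℝ)/2) := by
          rw [← ENNReal.rpow_add_of_nonneg _ _ (by norm_num) (by norm_num)]
          norm_num
  -- transfer to E3
  have t4 : (∫⁻ x, (‖u x‖₊ : ℝ≥0∞) ^ 4) = ∫⁻ p, U p ^ 4 :=
    (mp_ψ3.lintegral_comp (hcu.measurable.enorm.pow_const 4)).symm
  have t2 : (∫⁻ x, (‖u x‖₊ : ℝ≥0∞) ^ 2) = A :=
    (mp_ψ3.lintegral_comp (hcu.measurable.enorm.pow_const 2)).symm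
  have tB : (∫⁻ x, (‖fderiv ℝ u x‖₊ : ℝ≥0∞) ^ 2) = B :=
    (mp_ψ3.lintegral_comp (hcf.measurable.enorm.pow_const 2)).symm
  rw [t4, t2, tB]
  exact final

end FourthPowerAux
end FourthPower

open FourthPowerAux in
/-- The `L⁴` interpolation estimate: for `u` continuously differentiable with
compact support on ℝ³, `∫ u⁴ ≤ 4³ ‖u‖_{L²} ‖∇u‖_{L²}³`. -/
theorem fourth_power_integral_bound
    (u : EuclideanSpace ℝ (Fin 3) → ℝ) (hu : ContDiff ℝ 1 u)
    (hsupp : HasCompactSupport u) :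
    ∫ x, (u x) ^ 4 ≤
      4 ^ 3 * (∫ x, (u x) ^ 2) ^ ((1 : ℝ) / 2) *
        (∫ x, ‖gradient u x‖ ^ 2) ^ ((3 : ℝ) / 2) := by
  have hcu : Continuous u := hu.continuous
  have hcf : Continuous (fderiv ℝ u) := hu.continuous_fderiv one_ne_zero
  have hgrad : ∀ x, ‖gradient u x‖ = ‖fderiv ℝ u x‖ := fun x => by
    rw [gradient]
    exact LinearIsometryEquiv.norm_map _ _
  set a : ℝ≥0∞ := ∫⁻ x, (‖u x‖₊ : ℝ≥0∞) ^ 2 with hadef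
  set b : ℝ≥0∞ := ∫⁻ x, (‖fderiv ℝ u x‖₊ : ℝ≥0∞) ^ 2 with hbdef
  -- finiteness
  have ha_fin : a ≠ ∞ := by
    have hI : Integrable (fun x => u x ^ 2) :=
      ((hcu.pow 2).integrable_of_hasCompactSupport
        (hsupp.comp_left (g := fun r : ℝ => r ^ 2) (by norm_num) : HasCompactSupport (fun x => u x ^ 2)))
    have hlt : (∫⁻ x, (‖u x ^ 2‖₊ : ℝ≥0∞)) < ∞ := hI.2
    have heq : a = ∫⁻ x, (‖u x ^ 2‖₊ : ℝ≥0∞) := by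
      refine lintegral_congr fun x => ?_
      rw [nnnorm_pow]; push_cast; ring
    rw [heq]; exact hlt.ne
  have hb_fin : b ≠ ∞ := by
    have hI : Integrable (fun x => ‖fderiv ℝ u x‖ ^ 2) := by
      refine ((hcf.norm.pow 2).integrable_of_hasCompactSupport ?_)
      exact ((hsupp.fderiv ℝ).comp_left (g := fun v : _ => ‖v‖ ^ 2) (by norm_num) : HasCompactSupport (fun x => ‖fderiv ℝ u x‖ ^ 2))
    have hlt : (∫⁻ x, (‖(‖fderiv ℝ u x‖ ^ 2)‖₊ : ℝ≥0∞)) < ∞ := hI.2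
    have heq : b = ∫⁻ x, (‖(‖fderiv ℝ u x‖ ^ 2)‖₊ : ℝ≥0∞) := by
      refine lintegral_congr fun x => ?_
      rw [nnnorm_pow, nnnorm_norm]; push_cast; ring
    rw [heq]; exact hlt.ne
  -- real integrals as toReal of lintegrals
  have eq4 : ∫ x, u x ^ 4 = (∫⁻ x, (‖u x‖₊ : ℝ≥0∞) ^ 4).toReal := by
    rw [integral_eq_lintegral_of_nonneg_ae (f := fun x => u x ^ 4) (ae_of_all _ fun x => by positivity)
      ((hcu.pow 4).aestronglyMeasurable)]
    congr 1
    refine lintegral_congr fun x => ?_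
    rw [show u x ^ 4 = ‖u x‖ ^ 4 by rw [Real.norm_eq_abs, ← abs_pow, abs_of_nonneg (by positivity)],
      ENNReal.ofReal_pow (norm_nonneg _), ofReal_norm, enorm_eq_nnnorm]
  have eq2 : ∫ x, u x ^ 2 = a.toReal := by
    rw [integral_eq_lintegral_of_nonneg_ae (f := fun x => u x ^ 2) (ae_of_all _ fun x => by positivity)
      ((hcu.pow 2).aestronglyMeasurable)]
    congr 1
    refine lintegral_congr fun x => ?_
    rw [show u x ^ 2 = ‖u x‖ ^ 2 by rw [Real.norm_eq_abs, ← abs_pow, abs_of_nonneg (by positivity)],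
      ENNReal.ofReal_pow (norm_nonneg _), ofReal_norm, enorm_eq_nnnorm]
  have eqg : ∫ x, ‖gradient u x‖ ^ 2 = b.toReal := by
    simp_rw [hgrad]
    rw [integral_eq_lintegral_of_nonneg_ae (f := fun x => ‖fderiv ℝ u x‖ ^ 2) (ae_of_all _ fun x => by positivity)
      ((hcf.norm.pow 2).aestronglyMeasurable)]
    congr 1
    refine lintegral_congr fun x => ?_
    rw [ENNReal.ofReal_pow (norm_nonneg _), ofReal_norm, enorm_eq_nnnorm]
  have H := main_ennreal hu hsupp
  have hRfin : 8 * a ^ ((1:ℝ)/2) * b ^ ((3:ℝ)/2) ≠ ∞ :=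
    ENNReal.mul_ne_top (ENNReal.mul_ne_top (by simp)
      (ENNReal.rpow_ne_top_of_nonneg (by norm_num) ha_fin))
      (ENNReal.rpow_ne_top_of_nonneg (by norm_num) hb_fin)
  rw [eq4, eq2, eqg]
  calc (∫⁻ x, (‖u x‖₊ : ℝ≥0∞) ^ 4).toReal
      ≤ (8 * a ^ ((1:ℝ)/2) * b ^ ((3:ℝ)/2)).toReal := ENNReal.toReal_mono hRfin H
    _ = 8 * a.toReal ^ ((1:ℝ)/2) * b.toReal ^ ((3:ℝ)/2) := by
        rw [ENNReal.toReal_mul, ENNReal.toReal_mul, ENNReal.toReal_rpow, ENNReal.toReal_rpow]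
        norm_num
    _ ≤ 4 ^ 3 * a.toReal ^ ((1:ℝ)/2) * b.toReal ^ ((3:ℝ)/2) := by
        have h1 : (0:ℝ) ≤ a.toReal ^ ((1:ℝ)/2) := Real.rpow_nonneg ENNReal.toReal_nonneg _
        have h2 : (0:ℝ) ≤ b.toReal ^ ((3:ℝ)/2) := Real.rpow_nonneg ENNReal.toReal_nonneg _
        nlinarith
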